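/- Let n ≥ 2, let 1 ≤ k ≤ n−1, and let Ω be a 2×k matrix whose entries are linear forms on ℂ^{n+1} (elements of the dual space of ℂ^{n+1}). Assume Ω is 1-generic and that the entries of Ω span the dual space of ℂ^{n+1}. Then there exist an invertible 2×2 complex matrix P, an invertible k×k complex matrix Q, a basis z₀, …, z_n of the dual space of ℂ^{n+1}, and a strictly increasing map c : {0, …, k−1} → {0, …, n−1} with c(0) = 0, c(k−1) = n−1 and c(j+1) − c(j) ∈ {1, 2} for all j, such that (PΩQ)_{0,j} = z_{c(j)} and (PΩQ)_{1,j} = z_{c(j)+1} for every j; that is, PΩQ consists of consecutive catalecticant blocks whose entries are consecutive coordinates z_i, together covering all of z₀, …, z_n. -/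

import Mathlib

open Matrix

/-- Conjugation of a `2 × k` matrix `Ω` of linear forms by constant invertible matrices:
`(P Ω Q) i j = ∑ s t, P i s * Q t j • Ω s t`. -/
noncomputable def matConj {k n : ℕ} (P : Matrix (Fin 2) (Fin 2) ℂ)
    (Ω : Matrix (Fin 2) (Fin k) (Module.Dual ℂ (Fin (n+1) → ℂ)))
    (Q : Matrix (Fin k) (Fin k) ℂ) :
    Matrix (Fin 2) (Fin k) (Module.Dual ℂ (Fin (n+1) → ℂ)) :=
  Matrix.of fun i j => ∑ s, ∑ t, (P i s * Q t j) • Ω s t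

set_option linter.unusedSectionVars false
set_option maxHeartbeats 1000000
namespace Stmt8

open Module Submodule Function

variable {W U : Type} [AddCommGroup W] [Module ℂ W] [AddCommGroup U] [Module ℂ U]

/-- A (polynomial kernel) chain for the pencil `(γ, δ)`. -/
def IsChn (γ δ : W →ₗ[ℂ] U) (w : ℕ → W) : Prop :=
  δ (w 0) = 0 ∧ ∀ t, γ (w t) = δ (w (t + 1))

/-- Support bounded above by `m` (i.e. `w t = 0` for `t ≥ m`). -/
def SuppLt (m : ℕ) (w : ℕ → W) : Prop := ∀ t, m ≤ t → w t = 0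

/-- Extend a `Fin m`-tuple by zero. -/
def pad (m : ℕ) (x : Fin m → W) : ℕ → W := fun t => if h : t < m then x ⟨t, h⟩ else 0

/-- Shifted zero-extension: `pads m x s = pad m x (s-1)` with value `0` at `s = 0`. -/
def pads (m : ℕ) (x : Fin m → W) : ℕ → W := fun s =>
  if h : 0 < s ∧ s - 1 < m then x ⟨s - 1, h.2⟩ else 0

lemma pad_add (m : ℕ) (x y : Fin m → W) (t : ℕ) :
    pad m (x + y) t = pad m x t + pad m y t := by
  unfold pad; split <;> simp

lemma pad_smul (m : ℕ) (a : ℂ) (x : Fin m → W) (t : ℕ) :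
    pad m (a • x) t = a • pad m x t := by
  unfold pad; split <;> simp

lemma pads_add (m : ℕ) (x y : Fin m → W) (t : ℕ) :
    pads m (x + y) t = pads m x t + pads m y t := by
  unfold pads; split <;> simp

lemma pads_smul (m : ℕ) (a : ℂ) (x : Fin m → W) (t : ℕ) :
    pads m (a • x) t = a • pads m x t := by
  unfold pads; split <;> simp

lemma pad_suppLt (m : ℕ) (x : Fin m → W) : SuppLt m (pad m x) := by
  intro t ht; unfold pad; rw [dif_neg]; omega

lemma pads_eq_pad_sub (m : ℕ) (x : Fin m → W) (s : ℕ) (hs : 0 < s) :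
    pads m x s = pad m x (s - 1) := by
  unfold pads pad
  by_cases h : s - 1 < m
  · rw [dif_pos ⟨hs, h⟩, dif_pos h]
  · rw [dif_neg (by omega), dif_neg h]

lemma pads_zero' (m : ℕ) (x : Fin m → W) : pads m x 0 = 0 := by
  unfold pads; rw [dif_neg]; omega

/-- The basic "chain operator" sending `(x_0, …, x_{m-1})` to
`(δ x_0, δ x_1 - γ x_0, …, - γ x_{m-1})`. -/
noncomputable def chMap (γ δ : W →ₗ[ℂ] U) (m : ℕ) : (Fin m → W) →ₗ[ℂ] (Fin (m + 1) → U) where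
  toFun x := fun s => δ (pad m x s) - γ (pads m x s)
  map_add' x y := by
    funext s
    simp [pad_add, pads_add, map_add]
    abel
  map_smul' a x := by
    funext s
    simp [pad_smul, pads_smul, LinearMap.map_smul, smul_sub]

lemma chMap_apply (γ δ : W →ₗ[ℂ] U) (m : ℕ) (x : Fin m → W) (s : Fin (m + 1)) :
    chMap γ δ m x s = δ (pad m x s) - γ (pads m x s) := rfl

lemma chMap_apply_nat (γ δ : W →ₗ[ℂ] U) (m : ℕ) (x : Fin m → W) (s : ℕ) (hs : s < m + 1) :
    chMap γ δ m x ⟨s, hs⟩ = δ (pad m x s) - γ (if s = 0 then 0 else pad m x (s - 1)) := by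
  have h0 : chMap γ δ m x ⟨s, hs⟩ = δ (pad m x s) - γ (pads m x s) := rfl
  rw [h0]
  rcases Nat.eq_zero_or_pos s with h | h
  · subst h; rw [if_pos rfl, pads_zero']
  · rw [if_neg (by omega), pads_eq_pad_sub _ _ _ h]

/-- Membership in the kernel of `chMap` corresponds to chains supported below `m`. -/
lemma chain_of_chMap_eq_zero {γ δ : W →ₗ[ℂ] U} {m : ℕ} {x : Fin m → W}
    (h : chMap γ δ m x = 0) : IsChn γ δ (pad m x) := by
  constructor
  · have h0 := congrFun h ⟨0, by omega⟩
    simp only [chMap_apply, Pi.zero_apply] at h0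
    rw [pads_zero', map_zero, sub_zero] at h0
    exact h0
  · intro t
    by_cases ht : t + 1 < m + 1
    · have h1 := congrFun h ⟨t + 1, ht⟩
      simp only [chMap_apply, Pi.zero_apply] at h1
      rw [pads_eq_pad_sub _ _ _ (by omega)] at h1
      simp only [Nat.add_sub_cancel] at h1
      rw [sub_eq_zero] at h1
      exact h1.symm
    · have h1 : pad m x t = 0 := pad_suppLt m x t (by omega)
      have h2 : pad m x (t + 1) = 0 := pad_suppLt m x (t + 1) (by omega)
      rw [h1, h2, map_zero, map_zero]

lemma pad_coe (m : ℕ) (x : Fin m → W) (i : Fin m) : pad m x i = x i := by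
  unfold pad; rw [dif_pos i.isLt]

lemma chMap_eq_zero_of_chain {γ δ : W →ₗ[ℂ] U} {m : ℕ} {w : ℕ → W}
    (hc : IsChn γ δ w) (hs : SuppLt m w) : chMap γ δ m (fun i => w i) = 0 := by
  have hpad : ∀ t, pad m (fun i : Fin m => w i) t = w t := by
    intro t; unfold pad; split
    · rfl
    · rw [hs t (by omega)]
  funext s
  simp only [chMap_apply, Pi.zero_apply]
  rcases Nat.eq_zero_or_pos (s : ℕ) with h0 | h0
  · have hz : pads m (fun i : Fin m => w i) (s : ℕ) = 0 := by rw [h0]; exact pads_zero' _ _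
    rw [hz, map_zero, sub_zero, hpad, h0, hc.1]
  · rw [pads_eq_pad_sub _ _ _ h0, hpad, hpad, sub_eq_zero]
    have h2 := hc.2 ((s : ℕ) - 1)
    rw [Nat.sub_add_cancel h0] at h2
    exact h2.symm

lemma pad_single (m : ℕ) (j : Fin m) (x : W) (t : ℕ) :
    pad m (Pi.single j x) t = if t = (j : ℕ) then x else 0 := by
  unfold pad
  split
  · rename_i h
    rw [Pi.single_apply]
    by_cases he : t = (j : ℕ)
    · rw [if_pos he, if_pos (by exact Fin.ext he)]
    · rw [if_neg he, if_neg (by intro hc; exact he (by rw [← hc]))]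
  · rw [if_neg (by omega)]

lemma pads_single (m : ℕ) (j : Fin m) (x : W) (t : ℕ) :
    pads m (Pi.single j x) t = if t = (j : ℕ) + 1 then x else 0 := by
  rcases Nat.eq_zero_or_pos t with h0 | h0
  · subst h0; rw [pads_zero', if_neg (by omega)]
  · rw [pads_eq_pad_sub _ _ _ h0, pad_single]
    by_cases he : t = (j : ℕ) + 1
    · rw [if_pos (by omega), if_pos he]
    · rw [if_neg (by omega), if_neg he]

/-- Solving the linear system `ψ_t ∘ d - ψ_{t+1} ∘ g = r_t` (`t < m`), given that the
chain operator of `(g, d)` of size `m` is injective. -/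
lemma dual_solve {X Y : Type} [AddCommGroup X] [Module ℂ X] [AddCommGroup Y] [Module ℂ Y]
    (g d : X →ₗ[ℂ] Y) (m : ℕ) (hinj : Function.Injective (chMap g d m))
    (r : ℕ → Module.Dual ℂ X) :
    ∃ ψ : ℕ → Module.Dual ℂ Y, ∀ t, t < m → ∀ x, ψ t (d x) - ψ (t + 1) (g x) = r t x := by
  classical
  set R : Module.Dual ℂ (Fin m → X) := ∑ t : Fin m, (r t).comp (LinearMap.proj t) with hR
  obtain ⟨F, hF⟩ := (LinearMap.dualMap_surjective_of_injective hinj) R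
  refine ⟨fun t => if h : t < m + 1 then F.comp (LinearMap.single ℂ (fun _ => Y) ⟨t, h⟩) else 0,
    fun t ht x => ?_⟩
  have key : F (chMap g d m (Pi.single ⟨t, ht⟩ x)) = r t x := by
    have hFC : F.comp (chMap g d m) = R := hF
    calc F (chMap g d m (Pi.single ⟨t, ht⟩ x)) = (F.comp (chMap g d m)) (Pi.single ⟨t, ht⟩ x) := rfl
    _ = R (Pi.single ⟨t, ht⟩ x) := by rw [hFC]
    _ = r t x := by
        rw [hR]
        rw [LinearMap.sum_apply]
        rw [Finset.sum_eq_single (⟨t, ht⟩ : Fin m)]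
        · simp [LinearMap.proj]
        · intro b _ hb
          simp only [LinearMap.comp_apply, LinearMap.proj_apply]
          rw [Pi.single_apply, if_neg hb, map_zero]
        · intro h; exact absurd (Finset.mem_univ _) h
  have hch : chMap g d m (Pi.single ⟨t, ht⟩ x) =
      Pi.single (⟨t, by omega⟩ : Fin (m+1)) (d x) - Pi.single (⟨t+1, by omega⟩ : Fin (m+1)) (g x) := by
    funext s
    rw [chMap_apply, pad_single, pads_single]
    simp only [Pi.sub_apply, Pi.single_apply]
    by_cases h1 : (s : ℕ) = t
    · rw [if_pos h1, if_pos (show s = (⟨t, by omega⟩ : Fin (m+1)) from Fin.ext h1),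
        if_neg (show s ≠ (⟨t+1, by omega⟩ : Fin (m+1)) from by
          intro hc; have := congrArg Fin.val hc; simp only at this; omega),
        if_neg (by omega)]
      simp
    · rw [if_neg h1, if_neg (show s ≠ (⟨t, by omega⟩ : Fin (m+1)) from by
        intro hc; exact h1 (congrArg Fin.val hc)), map_zero]
      by_cases h2 : (s : ℕ) = t + 1
      · rw [if_pos h2, if_pos (show s = (⟨t+1, by omega⟩ : Fin (m+1)) from Fin.ext h2)]
      · rw [if_neg h2, if_neg (show s ≠ (⟨t+1, by omega⟩ : Fin (m+1)) from by
          intro hc; exact h2 (congrArg Fin.val hc)), map_zero]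
  rw [hch, map_sub] at key
  have e1 : ∀ (a : ℕ) (ha : a < m + 1) (y : Y),
      F (Pi.single (⟨a, ha⟩ : Fin (m+1)) y) =
      (if h : a < m + 1 then F.comp (LinearMap.single ℂ (fun _ => Y) ⟨a, h⟩) else 0) y := by
    intro a ha y; rw [dif_pos ha]; rfl
  rw [← e1 t (by omega) (d x), ← e1 (t+1) (by omega) (g x)]
  exact key


/-- Surjectivity of every member of the pencil. -/
def S1 (γ δ : W →ₗ[ℂ] U) : Prop :=
  ∀ a b : ℂ, ¬(a = 0 ∧ b = 0) → Function.Surjective (a • γ + b • δ)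

/-- Joint injectivity. -/
def S2 (γ δ : W →ₗ[ℂ] U) : Prop := ∀ x, γ x = 0 → δ x = 0 → x = 0

/-- The Kronecker-type decomposition of a pencil into `Lε`-blocks. -/
def Decomp (γ δ : W →ₗ[ℂ] U) : Prop :=
  ∃ (N K : ℕ) (b : ℕ → W) (f : ℕ → U) (c : ℕ → ℕ),
    LinearIndependent ℂ (fun i : Fin N => b i) ∧
    Submodule.span ℂ (b '' Set.Iio N) = ⊤ ∧
    LinearIndependent ℂ (fun j : Fin K => f j) ∧
    Submodule.span ℂ (f '' Set.Iio K) = ⊤ ∧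
    (∀ j1 j2, j1 < j2 → j2 < K → c j1 < c j2) ∧
    (∀ j, j < K → c j + 1 < N) ∧
    (∀ i, i < N → ∃ j, j < K ∧ (i = c j ∨ i = c j + 1)) ∧
    (∀ j, j < K → γ (b (c j)) = f j) ∧
    (∀ j, j < K → δ (b (c j + 1)) = f j) ∧
    (∀ i, i < N → (∀ j, j < K → i ≠ c j) → γ (b i) = 0) ∧
    (∀ i, i < N → (∀ j, j < K → i ≠ c j + 1) → δ (b i) = 0)

theorem decomp (D : ℕ) : ∀ (W U : Type) [AddCommGroup W] [Module ℂ W] [AddCommGroup U]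
    [Module ℂ U] [FiniteDimensional ℂ W] [FiniteDimensional ℂ U] (γ δ : W →ₗ[ℂ] U),
    Module.finrank ℂ W ≤ D → S1 γ δ → S2 γ δ → Decomp γ δ := by
  induction D using Nat.strong_induction_on with
  | _ D IH =>
  intro W U iW1 iW2 iU1 iU2 iW3 iU3 γ δ hD hS1 hS2
  classical
  by_cases h0 : Module.finrank ℂ W = 0
  · -- base case : W = 0
    haveI : Subsingleton W := (Module.finrank_zero_iff (R := ℂ) (M := W)).mp h0
    haveI : Subsingleton U := by
      have hsurj : Function.Surjective ((1:ℂ) • γ + (0:ℂ) • δ) := hS1 1 0 (by simp)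
      constructor
      intro a b
      obtain ⟨x, hx⟩ := hsurj a
      obtain ⟨y, hy⟩ := hsurj b
      rw [← hx, ← hy, Subsingleton.elim x y]
    refine ⟨0, 0, fun _ => 0, fun _ => 0, id, linearIndependent_empty_type,
      Subsingleton.elim _ _, linearIndependent_empty_type, Subsingleton.elim _ _,
      ?_, ?_, ?_, ?_, ?_, ?_, ?_⟩ <;> intro a <;> omega
  · -- inductive step
    have hWpos : 0 < Module.finrank ℂ W := Nat.pos_of_ne_zero h0
    haveI : Nontrivial W := Module.nontrivial_of_finrank_pos hWpos
    -- each member of the pencil, individually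
    have hmem : ∀ a b : ℂ, ¬(a = 0 ∧ b = 0) → ∀ u : U, ∃ x : W, a • γ x + b • δ x = u := by
      intro a b hab u
      obtain ⟨x, hx⟩ := hS1 a b hab u
      exact ⟨x, by simpa [LinearMap.add_apply, LinearMap.smul_apply] using hx⟩
    have hγs : Function.Surjective γ := by
      intro u
      obtain ⟨x, hx⟩ := hmem 1 0 (by simp) u
      exact ⟨x, by simpa using hx⟩
    have hδs : Function.Surjective δ := by
      intro u
      obtain ⟨x, hx⟩ := hmem 0 1 (by simp) u
      exact ⟨x, by simpa using hx⟩
    have hle : Module.finrank ℂ U ≤ Module.finrank ℂ W := by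
      have := LinearMap.finrank_range_add_finrank_ker γ
      rw [LinearMap.range_eq_top.mpr hγs, finrank_top] at this
      omega
    have hlt : Module.finrank ℂ U < Module.finrank ℂ W := by
      rcases lt_or_eq_of_le hle with h | h
      · exact h
      · exfalso
        have hδi : Function.Injective δ :=
          (LinearMap.injective_iff_surjective_of_finrank_eq_finrank h.symm).mpr hδs
        let e : W ≃ₗ[ℂ] U := LinearEquiv.ofBijective δ ⟨hδi, hδs⟩
        obtain ⟨μ, hμ⟩ := Module.End.exists_eigenvalue (e.symm.toLinearMap ∘ₗ γ)
        obtain ⟨x, hx⟩ := hμ.exists_hasEigenvector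
        have hxe : γ x = μ • δ x := by
          have h1 : e.symm (γ x) = μ • x := hx.apply_eq_smul
          have h2 : γ x = e (μ • x) := by rw [← h1]; simp
          rw [h2, _root_.map_smul]
          rfl
        have hker : (1:ℂ) • γ x + (-μ) • δ x = 0 := by
          rw [one_smul, hxe, neg_smul]; abel
        have hsurj : Function.Surjective ((1:ℂ) • γ + (-μ) • δ) := hS1 1 (-μ) (by simp)
        have hinj : Function.Injective ((1:ℂ) • γ + (-μ) • δ) :=
          (LinearMap.injective_iff_surjective_of_finrank_eq_finrank
            (f := (1:ℂ) • γ + (-μ) • δ) h.symm).mpr hsurj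
        have : x = 0 := by
          apply hinj
          rw [map_zero]
          simpa [LinearMap.add_apply, LinearMap.smul_apply] using hker
        exact hx.right this
    -- finrank of pi types
    have hfr : ∀ (V : Type) [AddCommGroup V] [Module ℂ V] [FiniteDimensional ℂ V] (m : ℕ),
        Module.finrank ℂ (Fin m → V) = m * Module.finrank ℂ V := by
      intro V _ _ _ m
      rw [Module.finrank_pi_fintype]
      simp [Finset.sum_const, mul_comm]
    -- existence of a nonzero chain
    have hchainex : ∃ ℓ₀ : ℕ, ∃ w : ℕ → W, IsChn γ δ w ∧ SuppLt (ℓ₀ + 1) w ∧ w ≠ 0 := by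
      set K0 := Module.finrank ℂ U with hK0
      have hnotinj : ¬ Function.Injective (chMap γ δ (K0 + 1)) := by
        intro hinj
        have hfle := LinearMap.finrank_le_finrank_of_injective hinj
        rw [hfr W (K0+1), hfr U (K0+2)] at hfle
        have h1 : (K0+1) * (K0+1) ≤ (K0+1) * Module.finrank ℂ W :=
          Nat.mul_le_mul_left _ (by omega)
        have h2 : (K0+1) * (K0+1) = (K0+2) * K0 + 1 := by ring
        have h3 : (K0+2) * Module.finrank ℂ U = (K0+2) * K0 := by rw [← hK0]
        omega
      unfold Function.Injective at hnotinj
      push_neg at hnotinj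
      obtain ⟨a, b, hab, hne⟩ := hnotinj
      have hx1 : chMap γ δ (K0+1) (a - b) = 0 := by rw [map_sub, hab, sub_self]
      have hx2 : a - b ≠ 0 := sub_ne_zero.mpr hne
      refine ⟨K0, pad (K0+1) (a - b), chain_of_chMap_eq_zero hx1, pad_suppLt _ _, ?_⟩
      intro hcon
      apply hx2
      funext i
      have := congrFun hcon (i : ℕ)
      rwa [pad_coe] at this
    -- minimal length chain
    let P : ℕ → Prop := fun m => ∃ w : ℕ → W, IsChn γ δ w ∧ SuppLt (m + 1) w ∧ w ≠ 0
    have hPex : ∃ m, P m := hchainex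
    let ℓ := Nat.find hPex
    obtain ⟨w, hwc, hws, hwne⟩ : P ℓ := Nat.find_spec hPex
    -- minimality, in convenient form
    have hmin : ∀ v : ℕ → W, IsChn γ δ v → SuppLt ℓ v → v = 0 := by
      intro v hvc hvs
      by_contra hvne
      rcases Nat.eq_zero_or_pos ℓ with hl0 | hlpos
      · apply hvne; funext t; rw [Pi.zero_apply]; exact hvs t (by omega)
      · have : P (ℓ - 1) := ⟨v, hvc, by intro t ht; exact hvs t (by omega), hvne⟩
        exact Nat.find_min hPex (by omega) this
    have hℓpos : 1 ≤ ℓ := by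
      by_contra hcon
      have hl0 : ℓ = 0 := by omega
      have hw0 : w 0 = 0 := by
        apply hS2
        · rw [hwc.2 0, hws 1 (by omega), map_zero]
        · exact hwc.1
      apply hwne; funext t
      rw [Pi.zero_apply]
      rcases Nat.eq_zero_or_pos t with h | h
      · rw [h, hw0]
      · exact hws t (by omega)
    -- the image chain u
    let u : ℕ → U := fun t => γ (w t)
    have hu_def : ∀ t, u t = γ (w t) := fun _ => rfl
    have hu_eq : ∀ t, u t = δ (w (t + 1)) := fun t => hwc.2 t
    have huz : ∀ t, ℓ ≤ t → u t = 0 := by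
      intro t ht
      rw [hu_eq t, hws (t+1) (by omega), map_zero]
    have hwℓ : w ℓ ≠ 0 := by
      intro hcon
      apply hwne
      apply hmin w hwc
      intro t ht
      rcases eq_or_lt_of_le ht with h | h
      · rw [← h, hcon]
      · exact hws t (by omega)
    -- linear independence of the u's (scalar form)
    have hurel : ∀ c : ℕ → ℂ, (∑ t ∈ Finset.range ℓ, c t • u t) = 0 →
        ∀ s, s < ℓ → c s = 0 := by
      intro c hrel
      set v : ℕ → W := fun j => ∑ t ∈ Finset.range ℓ, c t • w (t + 1 + j) with hv
      have hvapp : ∀ j, v j = ∑ t ∈ Finset.range ℓ, c t • w (t + 1 + j) := fun j => by rw [hv]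
      have hvc : IsChn γ δ v := by
        constructor
        · rw [hvapp 0, map_sum, ← hrel]
          refine Finset.sum_congr rfl fun t _ => ?_
          rw [LinearMap.map_smul, Nat.add_zero, ← hu_eq t]
        · intro j
          rw [hvapp j, hvapp (j+1), map_sum, map_sum]
          refine Finset.sum_congr rfl fun t _ => ?_
          rw [LinearMap.map_smul, LinearMap.map_smul, hwc.2 (t+1+j),
            show t + 1 + j + 1 = t + 1 + (j + 1) from by omega]
      have hvs : SuppLt ℓ v := by
        intro j hj
        rw [hvapp j]
        apply Finset.sum_eq_zero
        intro t _
        rw [hws (t + 1 + j) (by omega), smul_zero]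
      have hv0 := hmin v hvc hvs
      intro s
      induction s using Nat.strong_induction_on with
      | _ s IH2 =>
      intro hs
      have hvval : ∑ t ∈ Finset.range ℓ, c t • w (t + 1 + (ℓ - 1 - s)) = 0 := by
        rw [← hvapp (ℓ - 1 - s), hv0, Pi.zero_apply]
      have hsum : ∑ t ∈ Finset.range ℓ, c t • w (t + 1 + (ℓ - 1 - s))
          = c s • w (s + 1 + (ℓ - 1 - s)) := by
        apply Finset.sum_eq_single_of_mem s (Finset.mem_range.mpr hs)
        intro t _ hts
        rcases lt_or_gt_of_ne hts with h | h
        · rw [IH2 t h (by omega), zero_smul]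
        · rw [hws (t + 1 + (ℓ - 1 - s)) (by omega), smul_zero]
      have hidx : s + 1 + (ℓ - 1 - s) = ℓ := by omega
      rw [hsum, hidx] at hvval
      rcases smul_eq_zero.mp hvval with h | h
      · exact h
      · exact absurd h hwℓ
    -- linear independence of the w's (scalar form)
    have hwrel : ∀ a : ℕ → ℂ, (∑ t ∈ Finset.range (ℓ+1), a t • w t) = 0 →
        ∀ s, s < ℓ + 1 → a s = 0 := by
      intro a hrel s hs
      have hγrel : ∑ t ∈ Finset.range ℓ, a t • u t = 0 := by
        have h2 := congrArg γ hrel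
        rw [map_sum, map_zero, Finset.sum_range_succ] at h2
        have h3 : ∀ t ∈ Finset.range ℓ, γ (a t • w t) = a t • u t := fun t _ => by
          rw [LinearMap.map_smul, hu_def]
        rw [Finset.sum_congr rfl h3,
          show γ (a ℓ • w ℓ) = a ℓ • u ℓ from by rw [LinearMap.map_smul, hu_def],
          huz ℓ le_rfl, smul_zero, add_zero] at h2
        exact h2
      have hlow : ∀ t, t < ℓ → a t = 0 := fun t ht => hurel a hγrel t ht
      rcases Nat.lt_or_ge s ℓ with h | h
      · exact hlow s h
      · have hsℓ : s = ℓ := by omega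
        rw [Finset.sum_range_succ] at hrel
        have : ∑ t ∈ Finset.range ℓ, a t • w t = 0 := by
          apply Finset.sum_eq_zero
          intro t ht
          rw [hlow t (Finset.mem_range.mp ht), zero_smul]
        rw [this, zero_add] at hrel
        rcases smul_eq_zero.mp hrel with h' | h'
        · rw [hsℓ]; exact h'
        · exact absurd h' hwℓ
    have hw_li : LinearIndependent ℂ (fun t : Fin (ℓ+1) => w t) := by
      rw [Fintype.linearIndependent_iff]
      intro g hg i
      have h1 : ∑ t ∈ Finset.range (ℓ+1), (fun s => if h : s < ℓ+1 then g ⟨s, h⟩ else 0) t • w t = 0 := by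
        rw [Finset.sum_range fun t => _, ← hg]
        refine Finset.sum_congr rfl fun t _ => ?_
        simp only [dif_pos t.isLt]
      have := hwrel _ h1 i i.isLt
      rwa [dif_pos i.isLt] at this
    have hu_li : LinearIndependent ℂ (fun t : Fin ℓ => u t) := by
      rw [Fintype.linearIndependent_iff]
      intro g hg i
      have h1 : ∑ t ∈ Finset.range ℓ, (fun s => if h : s < ℓ then g ⟨s, h⟩ else 0) t • u t = 0 := by
        rw [Finset.sum_range fun t => _, ← hg]
        refine Finset.sum_congr rfl fun t _ => ?_
        simp only [dif_pos t.isLt]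
      have := hurel _ h1 i i.isLt
      rwa [dif_pos i.isLt] at this
    -- the span of the chain and of its image
    set W1 : Submodule ℂ W := Submodule.span ℂ (Set.range fun t : Fin (ℓ+1) => w t) with hW1
    set U1 : Submodule ℂ U := Submodule.span ℂ (Set.range fun t : Fin ℓ => u t) with hU1
    have hwmem : ∀ t, t < ℓ + 1 → w t ∈ W1 := fun t ht => Submodule.subset_span ⟨⟨t, ht⟩, rfl⟩
    have humem : ∀ t, t < ℓ → u t ∈ U1 := fun t ht => Submodule.subset_span ⟨⟨t, ht⟩, rfl⟩
    have humem' : ∀ t, u t ∈ U1 := by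
      intro t
      rcases Nat.lt_or_ge t ℓ with h | h
      · exact humem t h
      · rw [huz t h]; exact zero_mem _
    have hγW1 : ∀ x ∈ W1, γ x ∈ U1 := by
      intro x hx
      induction hx using Submodule.span_induction with
      | mem y hy => obtain ⟨t, rfl⟩ := hy; exact humem' t
      | zero => rw [map_zero]; exact zero_mem _
      | add y z _ _ hy hz => rw [map_add]; exact add_mem hy hz
      | smul a y _ hy => rw [LinearMap.map_smul]; exact Submodule.smul_mem _ _ hy
    have hδW1 : ∀ x ∈ W1, δ x ∈ U1 := by
      intro x hx
      induction hx using Submodule.span_induction with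
      | mem y hy =>
        obtain ⟨t, rfl⟩ := hy
        show δ (w (t : ℕ)) ∈ U1
        rcases Nat.eq_zero_or_pos (t : ℕ) with h | h
        · rw [h, hwc.1]; exact zero_mem _
        · have h6 := hu_eq ((t : ℕ) - 1)
          rw [Nat.sub_add_cancel h] at h6
          rw [← h6]; exact humem' _
      | zero => rw [map_zero]; exact zero_mem _
      | add y z _ _ hy hz => rw [map_add]; exact add_mem hy hz
      | smul a y _ hy => rw [LinearMap.map_smul]; exact Submodule.smul_mem _ _ hy
    have hfrW1 : Module.finrank ℂ W1 = ℓ + 1 := by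
      rw [hW1, finrank_span_eq_card hw_li, Fintype.card_fin]
    have hfrU1 : Module.finrank ℂ U1 = ℓ := by
      rw [hU1, finrank_span_eq_card hu_li, Fintype.card_fin]
    -- restrictions to W1
    let γ1 : W1 →ₗ[ℂ] U1 := LinearMap.codRestrict U1 (γ.comp W1.subtype) (fun x => hγW1 x.1 x.2)
    let δ1 : W1 →ₗ[ℂ] U1 := LinearMap.codRestrict U1 (δ.comp W1.subtype) (fun x => hδW1 x.1 x.2)
    have hcoeγ : ∀ x : W1, γ (x : W) = ((γ1 x : U1) : U) := fun x => rfl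
    have hcoeδ : ∀ x : W1, δ (x : W) = ((δ1 x : U1) : U) := fun x => rfl
    -- the chain operator of the restriction is bijective
    have hBker : ∀ q : Fin ℓ → W1, chMap γ1 δ1 ℓ q = 0 → q = 0 := by
      intro q hq
      have hchain := chain_of_chMap_eq_zero hq
      have hyc : IsChn γ δ (fun t => ((pad ℓ q t : W1) : W)) := by
        constructor
        · rw [hcoeδ, hchain.1, Submodule.coe_zero]
        · intro t; rw [hcoeγ, hcoeδ, hchain.2 t]
      have hys : SuppLt ℓ (fun t => ((pad ℓ q t : W1) : W)) := by
        intro t ht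
        show ((pad ℓ q t : W1) : W) = 0
        rw [pad_suppLt ℓ q t ht, Submodule.coe_zero]
      have h3 := hmin _ hyc hys
      funext i
      have h2 := congrFun h3 (i : ℕ)
      rw [Pi.zero_apply] at h2
      have h4 : pad ℓ q (i : ℕ) = 0 := by
        apply Subtype.ext
        exact h2
      rw [pad_coe] at h4
      rw [h4, Pi.zero_apply]
    have hBinj : Function.Injective (chMap γ1 δ1 ℓ) := by
      apply LinearMap.ker_eq_bot.mp
      rw [eq_bot_iff]
      intro q hq
      rw [Submodule.mem_bot]
      exact hBker q (LinearMap.mem_ker.mp hq)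
    have hBsurj : Function.Surjective (chMap γ1 δ1 ℓ) := by
      apply (LinearMap.injective_iff_surjective_of_finrank_eq_finrank ?_).mp hBinj
      rw [hfr _ ℓ, hfr _ (ℓ+1), hfrW1, hfrU1]
      ring
    -- complements
    obtain ⟨W2, hW2c⟩ := Submodule.exists_isCompl W1
    obtain ⟨U2, hU2c⟩ := Submodule.exists_isCompl U1
    let πU1 : U →ₗ[ℂ] U1 := U1.linearProjOfIsCompl U2 hU2c
    let πU2 : U →ₗ[ℂ] U2 := U2.linearProjOfIsCompl U1 hU2c.symm
    let πW1 : W →ₗ[ℂ] W1 := W1.linearProjOfIsCompl W2 hW2c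
    let πW2 : W →ₗ[ℂ] W2 := W2.linearProjOfIsCompl W1 hW2c.symm
    have hUdec : ∀ y : U, ((πU1 y : U1) : U) + ((πU2 y : U2) : U) = y :=
      fun y => Submodule.projection_add_projection_eq_self hU2c y
    have hWdec : ∀ x : W, ((πW1 x : W1) : W) + ((πW2 x : W2) : W) = x :=
      fun x => Submodule.projection_add_projection_eq_self hW2c x
    -- components of the pencil on W2
    let Γm : W2 →ₗ[ℂ] U1 := πU1 ∘ₗ γ ∘ₗ W2.subtype
    let Δm : W2 →ₗ[ℂ] U1 := πU1 ∘ₗ δ ∘ₗ W2.subtype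
    let γ2 : W2 →ₗ[ℂ] U2 := πU2 ∘ₗ γ ∘ₗ W2.subtype
    let δ2 : W2 →ₗ[ℂ] U2 := πU2 ∘ₗ δ ∘ₗ W2.subtype
    have hγdec : ∀ a : W2, γ (a : W) = ((Γm a : U1) : U) + ((γ2 a : U2) : U) :=
      fun a => (hUdec (γ (a : W))).symm
    have hδdec : ∀ a : W2, δ (a : W) = ((Δm a : U1) : U) + ((δ2 a : U2) : U) :=
      fun a => (hUdec (δ (a : W))).symm
    -- the quotient pencil has no nonzero chains of length `< ℓ`
    have hker2 : ∀ x : Fin (ℓ-1) → W2, chMap γ2 δ2 (ℓ-1) x = 0 → x = 0 := by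
      intro x hx
      have hxc := chain_of_chMap_eq_zero hx
      have hxz : ∀ s, ℓ - 1 ≤ s → pad (ℓ-1) x s = 0 := pad_suppLt _ x
      let ηn : ℕ → U1 := fun s => Δm (pad (ℓ-1) x s) - Γm (if s = 0 then 0 else pad (ℓ-1) x (s - 1))
      have ηapp : ∀ s, ηn s =
          Δm (pad (ℓ-1) x s) - Γm (if s = 0 then 0 else pad (ℓ-1) x (s - 1)) := fun _ => rfl
      obtain ⟨q, hq⟩ := hBsurj (fun s : Fin (ℓ+1) => ηn s)
      have hqz : ∀ s, ℓ ≤ s → pad ℓ q s = 0 := pad_suppLt ℓ q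
      have hqeq : ∀ s, (hs : s < ℓ + 1) →
          δ1 (pad ℓ q s) - γ1 (if s = 0 then 0 else pad ℓ q (s - 1)) = ηn s := by
        intro s hs
        rw [← chMap_apply_nat γ1 δ1 ℓ q s hs]
        exact congrFun hq ⟨s, hs⟩
      have hyapp : ∀ s : ℕ, True := fun _ => trivial
      have hyc : IsChn γ δ (fun s => ((pad (ℓ-1) x s : W2) : W) - ((pad ℓ q s : W1) : W)) := by
        constructor
        · rw [map_sub, hδdec (pad (ℓ-1) x 0), hxc.1, hcoeδ]
          have h6 := hqeq 0 (by omega)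
          rw [if_pos rfl, map_zero, sub_zero, ηapp 0, if_pos rfl, map_zero, sub_zero] at h6
          rw [h6, Submodule.coe_zero, add_zero, sub_self]
        · intro s
          rw [map_sub, map_sub, hγdec (pad (ℓ-1) x s), hδdec (pad (ℓ-1) x (s+1)), hcoeγ, hcoeδ,
            hxc.2 s]
          have h8 : δ1 (pad ℓ q (s+1)) - γ1 (pad ℓ q s) =
              Δm (pad (ℓ-1) x (s+1)) - Γm (pad (ℓ-1) x s) := by
            rcases Nat.lt_or_ge (s+1) (ℓ+1) with h | h
            · have h6 := hqeq (s+1) h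
              rw [if_neg (by omega), Nat.add_sub_cancel, ηapp (s+1), if_neg (by omega),
                Nat.add_sub_cancel] at h6
              exact h6
            · rw [hqz (s+1) (by omega), hqz s (by omega), hxz (s+1) (by omega),
                hxz s (by omega)]
              simp
          have h9 : ((δ1 (pad ℓ q (s+1)) : U1) : U) - ((γ1 (pad ℓ q s) : U1) : U) =
              ((Δm (pad (ℓ-1) x (s+1)) : U1) : U) - ((Γm (pad (ℓ-1) x s) : U1) : U) := by
            rw [← Submodule.coe_sub, ← Submodule.coe_sub, h8]
          calc ((Γm (pad (ℓ-1) x s) : U1) : U) + ((δ2 (pad (ℓ-1) x (s+1)) : U2) : U)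
                - ((γ1 (pad ℓ q s) : U1) : U)
              = (((δ1 (pad ℓ q (s+1)) : U1) : U) - ((γ1 (pad ℓ q s) : U1) : U)) +
                (((Γm (pad (ℓ-1) x s) : U1) : U) + ((δ2 (pad (ℓ-1) x (s+1)) : U2) : U)
                  - ((δ1 (pad ℓ q (s+1)) : U1) : U)) := by abel
            _ = (((Δm (pad (ℓ-1) x (s+1)) : U1) : U) - ((Γm (pad (ℓ-1) x s) : U1) : U)) +
                (((Γm (pad (ℓ-1) x s) : U1) : U) + ((δ2 (pad (ℓ-1) x (s+1)) : U2) : U)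
                  - ((δ1 (pad ℓ q (s+1)) : U1) : U)) := by rw [h9]
            _ = ((Δm (pad (ℓ-1) x (s+1)) : U1) : U) + ((δ2 (pad (ℓ-1) x (s+1)) : U2) : U)
                  - ((δ1 (pad ℓ q (s+1)) : U1) : U) := by abel
      have hys : SuppLt ℓ (fun s => ((pad (ℓ-1) x s : W2) : W) - ((pad ℓ q s : W1) : W)) := by
        intro s hsl
        show ((pad (ℓ-1) x s : W2) : W) - ((pad ℓ q s : W1) : W) = 0
        rw [hxz s (by omega), hqz s (by omega), Submodule.coe_zero, Submodule.coe_zero, sub_self]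
      have h3 := hmin _ hyc hys
      funext i
      have h2 := congrFun h3 (i : ℕ)
      rw [Pi.zero_apply, sub_eq_zero] at h2
      have hmem2 : ((pad (ℓ-1) x (i : ℕ) : W2) : W) ∈ W1 ⊓ W2 := by
        constructor
        · rw [h2]; exact (pad ℓ q (i : ℕ)).2
        · exact (pad (ℓ-1) x (i : ℕ)).2
      rw [hW2c.inf_eq_bot, Submodule.mem_bot] at hmem2
      have h4 : pad (ℓ-1) x (i : ℕ) = 0 := Subtype.ext hmem2
      rw [pad_coe] at h4
      rw [h4, Pi.zero_apply]
    have hinj2 : Function.Injective (chMap γ2 δ2 (ℓ-1)) := by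
      apply LinearMap.ker_eq_bot.mp
      rw [eq_bot_iff]
      intro q hq
      rw [Submodule.mem_bot]
      exact hker2 q (LinearMap.mem_ker.mp hq)
    -- basis of U1 given by the u's
    let uB : Basis (Fin ℓ) ℂ U1 := Basis.span hu_li
    have huB : ∀ t : Fin ℓ, ((uB t : U1) : U) = u (t : ℕ) := fun t => congrArg Subtype.val (Basis.span_apply hu_li t)
    have hrecon : ∀ y : U1, (y : U) = ∑ t : Fin ℓ, uB.coord t y • u (t : ℕ) := by
      intro y
      calc (y : U) = U1.subtype y := rfl
      _ = U1.subtype (∑ t, uB.repr y t • uB t) := by rw [uB.sum_repr y]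
      _ = ∑ t, uB.repr y t • U1.subtype (uB t) := by
          rw [map_sum]
          exact Finset.sum_congr rfl fun t _ => by rw [LinearMap.map_smul]
      _ = ∑ t, uB.coord t y • u (t : ℕ) := by
          refine Finset.sum_congr rfl fun t _ => ?_
          rw [Basis.coord_apply]
          congr 1
          exact huB t
    let coord' : ℕ → Module.Dual ℂ U1 := fun t => if h : t < ℓ then uB.coord ⟨t, h⟩ else 0
    have hcoord : ∀ t : Fin ℓ, coord' (t : ℕ) = uB.coord t := by
      intro t
      show (if h : (t : ℕ) < ℓ then uB.coord ⟨(t : ℕ), h⟩ else 0) = uB.coord t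
      rw [dif_pos t.isLt]
    -- solve for the correctors
    obtain ⟨ψs, hψs⟩ := dual_solve γ2 δ2 (ℓ-1) hinj2
      (fun t => (coord' t).comp Δm - (coord' (t+1)).comp Γm)
    have hψs' : ∀ t, t < ℓ - 1 → ∀ x : W2,
        ψs t (δ2 x) - ψs (t+1) (γ2 x) = coord' t (Δm x) - coord' (t+1) (Γm x) := by
      intro t ht x
      have := hψs t ht x
      simpa using this
    let φf : ℕ → Module.Dual ℂ W2 := fun t =>
      if t = ℓ then (ψs (ℓ-1)).comp δ2 - (coord' (ℓ-1)).comp Δm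
      else (ψs t).comp γ2 - (coord' t).comp Γm
    have hφf_lt : ∀ t, t ≠ ℓ → ∀ a : W2, φf t a = ψs t (γ2 a) - coord' t (Γm a) := by
      intro t ht a
      show (if t = ℓ then (ψs (ℓ-1)).comp δ2 - (coord' (ℓ-1)).comp Δm
        else (ψs t).comp γ2 - (coord' t).comp Γm) a = _
      rw [if_neg ht]
      simp
    have hφf_eq : ∀ a : W2, φf ℓ a = ψs (ℓ-1) (δ2 a) - coord' (ℓ-1) (Δm a) := by
      intro a
      show (if ℓ = ℓ then (ψs (ℓ-1)).comp δ2 - (coord' (ℓ-1)).comp Δm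
        else (ψs ℓ).comp γ2 - (coord' ℓ).comp Γm) a = _
      rw [if_pos rfl]
      simp
    let ψmap : U2 →ₗ[ℂ] U1 := ∑ t : Fin ℓ, (ψs (t : ℕ)).smulRight (uB t)
    have hψsum : ∀ m : U2, ((ψmap m : U1) : U) = ∑ t : Fin ℓ, ψs (t : ℕ) m • u (t : ℕ) := by
      intro m
      have h1 : ψmap m = ∑ t : Fin ℓ, ψs (t : ℕ) m • uB t := by
        show (∑ t : Fin ℓ, (ψs (t : ℕ)).smulRight (uB t)) m = _
        rw [LinearMap.sum_apply]
        exact Finset.sum_congr rfl fun t _ => rfl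
      calc ((ψmap m : U1) : U) = U1.subtype (ψmap m) := rfl
      _ = ∑ t : Fin ℓ, ψs (t : ℕ) m • U1.subtype (uB t) := by
          rw [h1, map_sum]
          exact Finset.sum_congr rfl fun t _ => by rw [LinearMap.map_smul]
      _ = ∑ t : Fin ℓ, ψs (t : ℕ) m • u (t : ℕ) := by
          refine Finset.sum_congr rfl fun t _ => ?_
          congr 1
          exact huB t
    let wvec : Fin (ℓ+1) → W1 := fun t => ⟨w (t : ℕ), hwmem _ t.isLt⟩
    let φmap : W2 →ₗ[ℂ] W1 := ∑ t : Fin (ℓ+1), (φf (t : ℕ)).smulRight (wvec t)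
    have hφsum : ∀ a : W2, ((φmap a : W1) : W) = ∑ t : Fin (ℓ+1), φf (t : ℕ) a • w (t : ℕ) := by
      intro a
      have h1 : φmap a = ∑ t : Fin (ℓ+1), φf (t : ℕ) a • wvec t := by
        show (∑ t : Fin (ℓ+1), (φf (t : ℕ)).smulRight (wvec t)) a = _
        rw [LinearMap.sum_apply]
        exact Finset.sum_congr rfl fun t _ => rfl
      calc ((φmap a : W1) : W) = W1.subtype (φmap a) := rfl
      _ = ∑ t : Fin (ℓ+1), φf (t : ℕ) a • W1.subtype (wvec t) := by
          rw [h1, map_sum]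
          exact Finset.sum_congr rfl fun t _ => by rw [LinearMap.map_smul]
      _ = ∑ t : Fin (ℓ+1), φf (t : ℕ) a • w (t : ℕ) := Finset.sum_congr rfl fun t _ => rfl
    -- the modified embeddings
    let ew : W2 →ₗ[ℂ] W := W2.subtype + W1.subtype ∘ₗ φmap
    let eu : U2 →ₗ[ℂ] U := U2.subtype + U1.subtype ∘ₗ ψmap
    have hew : ∀ a : W2, ew a = (a : W) + ((φmap a : W1) : W) := fun a => rfl
    have heu : ∀ m : U2, eu m = (m : U) + ((ψmap m : U1) : U) := fun m => rfl
    have hπW2ew : ∀ a : W2, πW2 (ew a) = a := by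
      intro a
      rw [hew, map_add]
      rw [show πW2 = W2.projectionOnto W1 hW2c.symm from rfl,
        Submodule.projectionOnto_apply_left hW2c.symm a,
        Submodule.projectionOnto_apply_right hW2c.symm (φmap a), add_zero]
    have hπU2eu : ∀ m : U2, πU2 (eu m) = m := by
      intro m
      rw [heu, map_add]
      rw [show πU2 = U2.projectionOnto U1 hU2c.symm from rfl,
        Submodule.projectionOnto_apply_left hU2c.symm m,
        Submodule.projectionOnto_apply_right hU2c.symm (ψmap m), add_zero]
    set W2' : Submodule ℂ W := LinearMap.range ew with hW2'
    set U2' : Submodule ℂ U := LinearMap.range eu with hU2'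
    have hcomplW' : IsCompl W1 W2' := by
      constructor
      · rw [disjoint_iff]
        rw [eq_bot_iff]
        rintro x ⟨hx1, hx2⟩
        obtain ⟨a, rfl⟩ := hx2
        have h2 : a = 0 := by
          have h3 := hπW2ew a
          rw [show πW2 = W2.projectionOnto W1 hW2c.symm from rfl,
            Submodule.projectionOnto_apply_of_mem_right hW2c.symm hx1] at h3
          exact h3.symm
        rw [Submodule.mem_bot, h2, map_zero]
      · rw [codisjoint_iff]
        rw [eq_top_iff]
        intro x _
        have hx : ((((πW1 x : W1) : W) - ((φmap (πW2 x) : W1) : W)) + ew (πW2 x)) = x := by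
          rw [hew]
          calc (((πW1 x : W1) : W) - ((φmap (πW2 x) : W1) : W)) +
              (((πW2 x : W2) : W) + ((φmap (πW2 x) : W1) : W))
              = ((πW1 x : W1) : W) + ((πW2 x : W2) : W) := by abel
          _ = x := hWdec x
        rw [← hx]
        apply Submodule.add_mem_sup
        · exact sub_mem (πW1 x).2 (φmap (πW2 x)).2
        · exact ⟨πW2 x, rfl⟩
    have hcomplU' : IsCompl U1 U2' := by
      constructor
      · rw [disjoint_iff]
        rw [eq_bot_iff]
        rintro y ⟨hy1, hy2⟩
        obtain ⟨m, rfl⟩ := hy2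
        have h2 : m = 0 := by
          have h3 := hπU2eu m
          rw [show πU2 = U2.projectionOnto U1 hU2c.symm from rfl,
            Submodule.projectionOnto_apply_of_mem_right hU2c.symm hy1] at h3
          exact h3.symm
        rw [Submodule.mem_bot, h2, map_zero]
      · rw [codisjoint_iff]
        rw [eq_top_iff]
        intro y _
        have hy : ((((πU1 y : U1) : U) - ((ψmap (πU2 y) : U1) : U)) + eu (πU2 y)) = y := by
          rw [heu]
          calc (((πU1 y : U1) : U) - ((ψmap (πU2 y) : U1) : U)) +
              (((πU2 y : U2) : U) + ((ψmap (πU2 y) : U1) : U))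
              = ((πU1 y : U1) : U) + ((πU2 y : U2) : U) := by abel
          _ = y := hUdec y
        rw [← hy]
        apply Submodule.add_mem_sup
        · exact sub_mem (πU1 y).2 (ψmap (πU2 y)).2
        · exact ⟨πU2 y, rfl⟩
    -- invariance of the modified complements
    have hγew : ∀ a : W2, γ (ew a) = eu (γ2 a) := by
      intro a
      rw [hew, heu, map_add]
      have h1 : γ ((φmap a : W1) : W) = ∑ t : Fin (ℓ+1), φf (t : ℕ) a • u (t : ℕ) := by
        rw [hφsum, map_sum]
        exact Finset.sum_congr rfl fun t _ => by rw [LinearMap.map_smul]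
      have h2 : (∑ t : Fin (ℓ+1), φf (t : ℕ) a • u (t : ℕ))
          = ∑ t : Fin ℓ, φf (t : ℕ) a • u (t : ℕ) := by
        rw [Fin.sum_univ_castSucc]
        have : u ((Fin.last ℓ : Fin (ℓ+1)) : ℕ) = 0 := huz _ (by simp)
        rw [this, smul_zero, add_zero]
        exact Finset.sum_congr rfl fun t _ => rfl
      rw [h1, h2, hγdec a, hψsum (γ2 a)]
      have h3 : (∑ t : Fin ℓ, uB.coord t (Γm a) • u (t : ℕ))
          + ∑ t : Fin ℓ, φf (t : ℕ) a • u (t : ℕ)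
          = ∑ t : Fin ℓ, ψs (t : ℕ) (γ2 a) • u (t : ℕ) := by
        rw [← Finset.sum_add_distrib]
        refine Finset.sum_congr rfl fun t _ => ?_
        rw [← add_smul]
        congr 1
        rw [hφf_lt (t : ℕ) (by omega) a, hcoord t]
        ring
      calc ((Γm a : U1) : U) + ((γ2 a : U2) : U) + ∑ t : Fin ℓ, φf (t : ℕ) a • u (t : ℕ)
          = ((γ2 a : U2) : U) + ((∑ t : Fin ℓ, uB.coord t (Γm a) • u (t : ℕ))
            + ∑ t : Fin ℓ, φf (t : ℕ) a • u (t : ℕ)) := by rw [← hrecon (Γm a)]; abel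
        _ = ((γ2 a : U2) : U) + ∑ t : Fin ℓ, ψs (t : ℕ) (γ2 a) • u (t : ℕ) := by rw [h3]
    have hδew : ∀ a : W2, δ (ew a) = eu (δ2 a) := by
      intro a
      rw [hew, heu, map_add]
      have h1 : δ ((φmap a : W1) : W) = ∑ t : Fin ℓ, φf ((t : ℕ) + 1) a • u (t : ℕ) := by
        rw [hφsum, map_sum, Fin.sum_univ_succ]
        have h0 : δ (w ((0 : Fin (ℓ+1)) : ℕ)) = 0 := hwc.1
        rw [show ∀ (c : ℂ), δ (c • w ((0 : Fin (ℓ+1)) : ℕ)) = c • δ (w ((0 : Fin (ℓ+1)) : ℕ))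
          from fun c => LinearMap.map_smul δ c _, h0, smul_zero, zero_add]
        refine Finset.sum_congr rfl fun t _ => ?_
        rw [LinearMap.map_smul]
        have hsv : ((Fin.succ t : Fin (ℓ+1)) : ℕ) = (t : ℕ) + 1 := rfl
        rw [hsv, ← hu_eq (t : ℕ)]
      have h3 : (∑ t : Fin ℓ, uB.coord t (Δm a) • u (t : ℕ))
          + ∑ t : Fin ℓ, φf ((t : ℕ) + 1) a • u (t : ℕ)
          = ∑ t : Fin ℓ, ψs (t : ℕ) (δ2 a) • u (t : ℕ) := by
        rw [← Finset.sum_add_distrib]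
        refine Finset.sum_congr rfl fun t _ => ?_
        rw [← add_smul]
        congr 1
        rcases Nat.lt_or_ge ((t : ℕ) + 1) ℓ with h | h
        · rw [hφf_lt ((t : ℕ) + 1) (by omega) a]
          have h5 := hψs' (t : ℕ) (by omega) a
          rw [hcoord t] at h5
          linear_combination (-1 : ℂ) * h5
        · have htl : (t : ℕ) = ℓ - 1 := by omega
          have htl2 : (t : ℕ) + 1 = ℓ := by omega
          rw [htl2, hφf_eq a, ← htl, hcoord t]
          ring
      rw [h1, hδdec a, hψsum (δ2 a)]
      calc ((Δm a : U1) : U) + ((δ2 a : U2) : U) + ∑ t : Fin ℓ, φf ((t : ℕ)+1) a • u (t : ℕ)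
          = ((δ2 a : U2) : U) + ((∑ t : Fin ℓ, uB.coord t (Δm a) • u (t : ℕ))
            + ∑ t : Fin ℓ, φf ((t : ℕ)+1) a • u (t : ℕ)) := by rw [← hrecon (Δm a)]; abel
        _ = ((δ2 a : U2) : U) + ∑ t : Fin ℓ, ψs (t : ℕ) (δ2 a) • u (t : ℕ) := by rw [h3]
    -- splitting of W along W1 and W2'
    have hWsplit : ∀ x : W,
        ((((πW1 x : W1) : W) - ((φmap (πW2 x) : W1) : W)) + ew (πW2 x)) = x := by
      intro x
      rw [hew]
      calc (((πW1 x : W1) : W) - ((φmap (πW2 x) : W1) : W)) +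
          (((πW2 x : W2) : W) + ((φmap (πW2 x) : W1) : W))
          = ((πW1 x : W1) : W) + ((πW2 x : W2) : W) := by abel
      _ = x := hWdec x
    -- the restricted pencil
    have hγmem' : ∀ x ∈ W2', γ x ∈ U2' := by rintro x ⟨a, rfl⟩; exact ⟨γ2 a, (hγew a).symm⟩
    have hδmem' : ∀ x ∈ W2', δ x ∈ U2' := by rintro x ⟨a, rfl⟩; exact ⟨δ2 a, (hδew a).symm⟩
    let γ' : W2' →ₗ[ℂ] U2' := γ.restrict hγmem'
    let δ' : W2' →ₗ[ℂ] U2' := δ.restrict hδmem'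
    have hγ'coe : ∀ x : W2', ((γ' x : U2') : U) = γ (x : W) := fun x => rfl
    have hδ'coe : ∀ x : W2', ((δ' x : U2') : U) = δ (x : W) := fun x => rfl
    have hS1' : S1 γ' δ' := by
      intro a b hab yy
      obtain ⟨ub, hub⟩ := yy
      set T : W →ₗ[ℂ] U := a • γ + b • δ with hT
      obtain ⟨x, hx⟩ : ∃ x, T x = ub := hS1 a b hab ub
      have hTval : ∀ z : W, T z = a • γ z + b • δ z := fun z => rfl
      have hmem1 : (((πW1 x : W1) : W) - ((φmap (πW2 x) : W1) : W)) ∈ W1 :=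
        sub_mem (πW1 x).2 (φmap (πW2 x)).2
      have h1 : T ((((πW1 x : W1) : W) - ((φmap (πW2 x) : W1) : W))) + T (ew (πW2 x)) = ub := by
        rw [← map_add, hWsplit x, hx]
      have h2 : T (ew (πW2 x)) = eu (a • γ2 (πW2 x) + b • δ2 (πW2 x)) := by
        rw [hTval, hγew, hδew, map_add, LinearMap.map_smul, LinearMap.map_smul]
      have h3 : T ((((πW1 x : W1) : W) - ((φmap (πW2 x) : W1) : W))) ∈ U1 := by
        rw [hTval]
        exact add_mem (Submodule.smul_mem _ _ (hγW1 _ hmem1))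
          (Submodule.smul_mem _ _ (hδW1 _ hmem1))
      have h4 : T ((((πW1 x : W1) : W) - ((φmap (πW2 x) : W1) : W))) ∈ U2' := by
        have h5 : T ((((πW1 x : W1) : W) - ((φmap (πW2 x) : W1) : W)))
            = ub - T (ew (πW2 x)) := by rw [← h1]; abel
        rw [h5, h2]
        exact sub_mem hub ⟨_, rfl⟩
      have h5 : T ((((πW1 x : W1) : W) - ((φmap (πW2 x) : W1) : W))) = 0 :=
        Submodule.disjoint_def.mp hcomplU'.disjoint _ h3 h4
      have h6 : T (ew (πW2 x)) = ub := by
        rw [← h1, h5, zero_add]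
      refine ⟨⟨ew (πW2 x), ⟨πW2 x, rfl⟩⟩, ?_⟩
      apply Subtype.ext
      show a • γ (ew (πW2 x)) + b • δ (ew (πW2 x)) = ub
      rw [← hTval]
      exact h6
    have hS2' : S2 γ' δ' := by
      intro x hγx hδx
      apply Subtype.ext
      apply hS2 x.1
      · rw [← hγ'coe x, hγx, Submodule.coe_zero]
      · rw [← hδ'coe x, hδx, Submodule.coe_zero]
    have hfrW2' : Module.finrank ℂ W2' + (ℓ + 1) = Module.finrank ℂ W := by
      have h9 := Submodule.finrank_add_eq_of_isCompl hcomplW'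
      rw [hfrW1] at h9
      omega
    obtain ⟨N'', K'', b'', f'', c'', hb''li, hb''sp, hf''li, hf''sp, hc''mono, hc''lt,
      hc''cov, hγ'', hδ'', hγ''0, hδ''0⟩ :=
      IH (Module.finrank ℂ W2') (by omega) W2' U2' γ' δ' le_rfl hS1' hS2'
    -- assembly
    let bN : ℕ → W := fun i => if i < ℓ + 1 then w i else ((b'' (i - (ℓ+1)) : W2') : W)
    let fN : ℕ → U := fun j => if j < ℓ then u j else ((f'' (j - ℓ) : U2') : U)
    let cN : ℕ → ℕ := fun j => if j < ℓ then j else c'' (j - ℓ) + (ℓ + 1)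
    have hbN : ∀ i, bN i = if i < ℓ + 1 then w i else ((b'' (i - (ℓ+1)) : W2') : W) :=
      fun _ => rfl
    have hfN : ∀ j, fN j = if j < ℓ then u j else ((f'' (j - ℓ) : U2') : U) := fun _ => rfl
    have hcN : ∀ j, cN j = if j < ℓ then j else c'' (j - ℓ) + (ℓ + 1) := fun _ => rfl
    refine ⟨ℓ + 1 + N'', ℓ + K'', bN, fN, cN, ?_, ?_, ?_, ?_, ?_, ?_, ?_, ?_, ?_, ?_, ?_⟩
    · -- linear independence of b
      have h2 : LinearIndependent ℂ (fun i : Fin N'' => ((b'' (i : ℕ) : W2') : W)) :=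
        hb''li.map' W2'.subtype (Submodule.ker_subtype W2')
      have hsp2 : Submodule.span ℂ (Set.range fun i : Fin N'' => ((b'' (i : ℕ) : W2') : W))
          = W2' := by
        have hr : (Set.range fun i : Fin N'' => ((b'' (i : ℕ) : W2') : W))
            = W2'.subtype '' (b'' '' Set.Iio N'') := by
          ext x
          constructor
          · rintro ⟨i, rfl⟩; exact ⟨b'' (i : ℕ), ⟨(i : ℕ), i.isLt, rfl⟩, rfl⟩
          · rintro ⟨y, ⟨i, hi, rfl⟩, rfl⟩; exact ⟨⟨i, hi⟩, rfl⟩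
        rw [hr, ← Submodule.map_span, hb''sp, Submodule.map_subtype_top]
      have hsum : LinearIndependent ℂ
          (Sum.elim (fun t : Fin (ℓ+1) => w (t : ℕ))
            (fun i : Fin N'' => ((b'' (i : ℕ) : W2') : W))) := by
        apply LinearIndependent.sum_type hw_li h2
        rw [hsp2, ← hW1]
        exact hcomplW'.disjoint
      have hcomp := hsum.comp _ (finSumFinEquiv (m := ℓ+1) (n := N'')).symm.injective
      have hfam : (fun i : Fin (ℓ+1+N'') => bN (i : ℕ))
          = (Sum.elim (fun t : Fin (ℓ+1) => w (t : ℕ))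
            (fun i : Fin N'' => ((b'' (i : ℕ) : W2') : W))) ∘ finSumFinEquiv.symm := by
        funext i
        show bN (i : ℕ) = _
        rw [hbN]
        by_cases h : (i : ℕ) < ℓ + 1
        · have hi : i = Fin.castAdd N'' ⟨(i : ℕ), h⟩ := Fin.ext rfl
          rw [if_pos h]
          conv_rhs => rw [hi]
          rw [Function.comp_apply, finSumFinEquiv_symm_apply_castAdd, Sum.elim_inl]
        · have hi : i = Fin.natAdd (ℓ+1) ⟨(i : ℕ) - (ℓ+1), by omega⟩ := Fin.ext (by
            show (i : ℕ) = (ℓ+1) + ((i : ℕ) - (ℓ+1)); omega)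
          rw [if_neg h]
          conv_rhs => rw [hi]
          rw [Function.comp_apply, finSumFinEquiv_symm_apply_natAdd, Sum.elim_inr]
      rw [hfam]
      exact hcomp
    · -- span of b
      have himg : bN '' Set.Iio (ℓ + 1 + N'')
          = (Set.range fun t : Fin (ℓ+1) => w (t : ℕ))
            ∪ (W2'.subtype '' (b'' '' Set.Iio N'')) := by
        ext x
        constructor
        · rintro ⟨i, hi, rfl⟩
          simp only [Set.mem_Iio] at hi
          rw [hbN]
          rcases Nat.lt_or_ge i (ℓ+1) with h | h
          · rw [if_pos h]; exact Or.inl ⟨⟨i, h⟩, rfl⟩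
          · rw [if_neg (by omega)]
            exact Or.inr ⟨b'' (i - (ℓ+1)), ⟨i - (ℓ+1), Set.mem_Iio.mpr (by omega), rfl⟩, rfl⟩
        · rintro (⟨t, rfl⟩ | ⟨y, ⟨i, hi, rfl⟩, rfl⟩)
          · exact ⟨(t : ℕ), Set.mem_Iio.mpr (by omega), by rw [hbN, if_pos t.isLt]⟩
          · simp only [Set.mem_Iio] at hi
            refine ⟨i + (ℓ+1), Set.mem_Iio.mpr (by omega), ?_⟩
            rw [hbN, if_neg (by omega), Nat.add_sub_cancel]
            rfl
      rw [himg, Submodule.span_union, ← hW1, ← Submodule.map_span, hb''sp,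
        Submodule.map_subtype_top]
      exact hcomplW'.codisjoint.eq_top
    · -- linear independence of f
      have h2 : LinearIndependent ℂ (fun j : Fin K'' => ((f'' (j : ℕ) : U2') : U)) :=
        hf''li.map' U2'.subtype (Submodule.ker_subtype U2')
      have hsp2 : Submodule.span ℂ (Set.range fun j : Fin K'' => ((f'' (j : ℕ) : U2') : U))
          = U2' := by
        have hr : (Set.range fun j : Fin K'' => ((f'' (j : ℕ) : U2') : U))
            = U2'.subtype '' (f'' '' Set.Iio K'') := by
          ext x
          constructor
          · rintro ⟨j, rfl⟩; exact ⟨f'' (j : ℕ), ⟨(j : ℕ), j.isLt, rfl⟩, rfl⟩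
          · rintro ⟨y, ⟨j, hj, rfl⟩, rfl⟩; exact ⟨⟨j, hj⟩, rfl⟩
        rw [hr, ← Submodule.map_span, hf''sp, Submodule.map_subtype_top]
      have hsum : LinearIndependent ℂ
          (Sum.elim (fun t : Fin ℓ => u (t : ℕ))
            (fun j : Fin K'' => ((f'' (j : ℕ) : U2') : U))) := by
        apply LinearIndependent.sum_type hu_li h2
        rw [hsp2, ← hU1]
        exact hcomplU'.disjoint
      have hcomp := hsum.comp _ (finSumFinEquiv (m := ℓ) (n := K'')).symm.injective
      have hfam : (fun j : Fin (ℓ+K'') => fN (j : ℕ))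
          = (Sum.elim (fun t : Fin ℓ => u (t : ℕ))
            (fun j : Fin K'' => ((f'' (j : ℕ) : U2') : U))) ∘ finSumFinEquiv.symm := by
        funext j
        show fN (j : ℕ) = _
        rw [hfN]
        by_cases h : (j : ℕ) < ℓ
        · have hj : j = Fin.castAdd K'' ⟨(j : ℕ), h⟩ := Fin.ext rfl
          rw [if_pos h]
          conv_rhs => rw [hj]
          rw [Function.comp_apply, finSumFinEquiv_symm_apply_castAdd, Sum.elim_inl]
        · have hj : j = Fin.natAdd ℓ ⟨(j : ℕ) - ℓ, by omega⟩ := Fin.ext (by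
            show (j : ℕ) = ℓ + ((j : ℕ) - ℓ); omega)
          rw [if_neg h]
          conv_rhs => rw [hj]
          rw [Function.comp_apply, finSumFinEquiv_symm_apply_natAdd, Sum.elim_inr]
      rw [hfam]
      exact hcomp
    · -- span of f
      have himg : fN '' Set.Iio (ℓ + K'')
          = (Set.range fun t : Fin ℓ => u (t : ℕ))
            ∪ (U2'.subtype '' (f'' '' Set.Iio K'')) := by
        ext x
        constructor
        · rintro ⟨j, hj, rfl⟩
          simp only [Set.mem_Iio] at hj
          rw [hfN]
          rcases Nat.lt_or_ge j ℓ with h | h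
          · rw [if_pos h]; exact Or.inl ⟨⟨j, h⟩, rfl⟩
          · rw [if_neg (by omega)]
            exact Or.inr ⟨f'' (j - ℓ), ⟨j - ℓ, Set.mem_Iio.mpr (by omega), rfl⟩, rfl⟩
        · rintro (⟨t, rfl⟩ | ⟨y, ⟨j, hj, rfl⟩, rfl⟩)
          · exact ⟨(t : ℕ), Set.mem_Iio.mpr (by omega), by rw [hfN, if_pos t.isLt]⟩
          · simp only [Set.mem_Iio] at hj
            refine ⟨j + ℓ, Set.mem_Iio.mpr (by omega), ?_⟩
            rw [hfN, if_neg (by omega), Nat.add_sub_cancel]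
            rfl
      rw [himg, Submodule.span_union, ← hU1, ← Submodule.map_span, hf''sp,
        Submodule.map_subtype_top]
      exact hcomplU'.codisjoint.eq_top
    · -- c strictly monotone
      intro j1 j2 hj hj2
      rw [hcN, hcN]
      by_cases h1 : j1 < ℓ
      · by_cases h2 : j2 < ℓ
        · rw [if_pos h1, if_pos h2]; omega
        · rw [if_pos h1, if_neg h2]; omega
      · have h2 : ¬ j2 < ℓ := by omega
        rw [if_neg h1, if_neg h2]
        have := hc''mono (j1 - ℓ) (j2 - ℓ) (by omega) (by omega)
        omega
    · -- c j + 1 < N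
      intro j hj
      rw [hcN]
      by_cases h1 : j < ℓ
      · rw [if_pos h1]; omega
      · rw [if_neg h1]
        have := hc''lt (j - ℓ) (by omega)
        omega
    · -- coverage
      intro i hi
      rcases Nat.lt_or_ge i ℓ with h | h
      · exact ⟨i, by omega, Or.inl (by rw [hcN, if_pos h])⟩
      · rcases Nat.eq_or_lt_of_le h with h' | h'
        · refine ⟨ℓ - 1, by omega, Or.inr ?_⟩
          rw [hcN, if_pos (by omega)]
          omega
        · obtain ⟨j, hj, hor⟩ := hc''cov (i - (ℓ+1)) (by omega)
          refine ⟨j + ℓ, by omega, ?_⟩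
          rw [hcN, if_neg (by omega), Nat.add_sub_cancel]
          rcases hor with h'' | h'' <;> [left; right] <;> omega
    · -- γ values
      intro j hj
      rw [hcN, hfN]
      by_cases h1 : j < ℓ
      · rw [if_pos h1, if_pos h1, hbN, if_pos (by omega : j < ℓ + 1)]
      · rw [if_neg h1, if_neg h1, hbN, if_neg (by have := hc''lt (j - ℓ) (by omega); omega),
          Nat.add_sub_cancel]
        have h3 := hγ'' (j - ℓ) (by omega)
        calc γ ((b'' (c'' (j - ℓ)) : W2') : W) = ((γ' (b'' (c'' (j - ℓ))) : U2') : U) :=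
              (hγ'coe _).symm
        _ = ((f'' (j - ℓ) : U2') : U) := by rw [h3]
    · -- δ values
      intro j hj
      rw [hcN, hfN]
      by_cases h1 : j < ℓ
      · rw [if_pos h1, if_pos h1, hbN, if_pos (by omega : j + 1 < ℓ + 1)]
        exact (hu_eq j).symm
      · rw [if_neg h1, if_neg h1, hbN]
        rw [if_neg (by have := hc''lt (j - ℓ) (by omega); omega)]
        have harith : c'' (j - ℓ) + (ℓ + 1) + 1 - (ℓ + 1) = c'' (j - ℓ) + 1 := by omega
        rw [harith]
        have h3 := hδ'' (j - ℓ) (by omega)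
        calc δ ((b'' (c'' (j - ℓ) + 1) : W2') : W) = ((δ' (b'' (c'' (j - ℓ) + 1)) : U2') : U) :=
              (hδ'coe _).symm
        _ = ((f'' (j - ℓ) : U2') : U) := by rw [h3]
    · -- γ zero
      intro i hi hne
      rw [hbN]
      rcases Nat.lt_or_ge i ℓ with h | h
      · exact absurd (by rw [hcN, if_pos h]) (hne i (by omega))
      · rcases Nat.eq_or_lt_of_le h with h' | h'
        · have hi' : i = ℓ := h'.symm
          rw [if_pos (by omega), hi']
          rw [show γ (w ℓ) = u ℓ from rfl, huz ℓ (by omega)]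
        · rw [if_neg (by omega)]
          have h3 := hγ''0 (i - (ℓ+1)) (by omega) (by
            intro j' hj' hc
            exact hne (j' + ℓ) (by omega) (by
              rw [hcN, if_neg (by omega), Nat.add_sub_cancel, ← hc]
              omega))
          calc γ ((b'' (i - (ℓ+1)) : W2') : W) = ((γ' (b'' (i - (ℓ+1))) : U2') : U) :=
                (hγ'coe _).symm
          _ = 0 := by rw [h3, Submodule.coe_zero]
    · -- δ zero
      intro i hi hne
      rw [hbN]
      rcases Nat.eq_zero_or_pos i with h | h
      · rw [h, if_pos (by omega)]
        exact hwc.1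
      · rcases Nat.lt_or_ge i (ℓ+1) with h' | h'
        · exact absurd (by rw [hcN, if_pos (by omega : i - 1 < ℓ)]; omega) (hne (i-1) (by omega))
        · rw [if_neg (by omega)]
          have h3 := hδ''0 (i - (ℓ+1)) (by omega) (by
            intro j' hj' hc
            exact hne (j' + ℓ) (by omega) (by
              rw [hcN, if_neg (by omega), Nat.add_sub_cancel]
              omega))
          calc δ ((b'' (i - (ℓ+1)) : W2') : W) = ((δ' (b'' (i - (ℓ+1))) : U2') : U) :=
                (hδ'coe _).symm
          _ = 0 := by rw [h3, Submodule.coe_zero]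

end Stmt8

theorem stmt_8 (n k : ℕ) (hn : 2 ≤ n) (hk : 1 ≤ k) (hkn : k ≤ n - 1)
    (Ω : Matrix (Fin 2) (Fin k) (Module.Dual ℂ (Fin (n+1) → ℂ)))
    (hgen : ∀ u : Fin 2 → ℂ, u ≠ 0 → ∀ v : Fin k → ℂ, v ≠ 0 →
      (∑ i, ∑ j, (u i * v j) • Ω i j) ≠ 0)
    (hspan : Submodule.span ℂ (Set.range fun p : Fin 2 × Fin k => Ω p.1 p.2) = ⊤) :
    ∃ P : Matrix (Fin 2) (Fin 2) ℂ, IsUnit P ∧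
    ∃ Q : Matrix (Fin k) (Fin k) ℂ, IsUnit Q ∧
    ∃ z : Module.Basis (Fin (n+1)) ℂ (Module.Dual ℂ (Fin (n+1) → ℂ)),
    ∃ c : Fin k → Fin n,
      StrictMono c ∧
      ((c ⟨0, by omega⟩ : Fin n) : ℕ) = 0 ∧
      ((c ⟨k-1, by omega⟩ : Fin n) : ℕ) = n - 1 ∧
      (∀ (j : ℕ) (hj : j + 1 < k),
        ((c ⟨j+1, hj⟩ : Fin n) : ℕ) - ((c ⟨j, by omega⟩ : Fin n) : ℕ) = 1 ∨
        ((c ⟨j+1, hj⟩ : Fin n) : ℕ) - ((c ⟨j, by omega⟩ : Fin n) : ℕ) = 2) ∧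
      ∀ j : Fin k,
        matConj P Ω Q 0 j = z (Fin.castSucc (c j)) ∧
        matConj P Ω Q 1 j = z (Fin.succ (c j)) := by
  classical
  -- the pencil of coordinate maps
  let γ : (Fin (n+1) → ℂ) →ₗ[ℂ] (Fin k → ℂ) := LinearMap.pi (fun j => Ω 0 j)
  let δ : (Fin (n+1) → ℂ) →ₗ[ℂ] (Fin k → ℂ) := LinearMap.pi (fun j => Ω 1 j)
  have hγapp : ∀ x j, γ x j = Ω 0 j x := fun x j => rfl
  have hδapp : ∀ x j, δ x j = Ω 1 j x := fun x j => rfl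
  have hsingle : ∀ (y : Fin k → ℂ) (g : Module.Dual ℂ (Fin k → ℂ)),
      g y = ∑ j, y j * g (Pi.single j 1) := by
    intro y g
    conv_lhs => rw [show y = ∑ j, y j • (Pi.single j (1:ℂ) : Fin k → ℂ) from by
      funext t
      rw [Finset.sum_apply]
      rw [Finset.sum_eq_single t]
      · rw [Pi.smul_apply, Pi.single_eq_same, smul_eq_mul, mul_one]
      · intro s _ hs
        rw [Pi.smul_apply, Pi.single_eq_of_ne (Ne.symm hs), smul_eq_mul, mul_zero]
      · intro h; exact absurd (Finset.mem_univ _) h]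
    rw [map_sum]
    exact Finset.sum_congr rfl fun j _ => by rw [LinearMap.map_smul, smul_eq_mul]
  have hS1 : Stmt8.S1 γ δ := by
    intro a b hab
    by_contra hns
    have hlt : LinearMap.range (a • γ + b • δ) < ⊤ := lt_of_le_of_ne le_top (by
      intro h; exact hns (LinearMap.range_eq_top.mp h))
    obtain ⟨g, hg0, hgbot⟩ := Submodule.exists_dual_map_eq_bot_of_lt_top hlt inferInstance
    have hgz : ∀ x : Fin (n+1) → ℂ, g ((a • γ + b • δ) x) = 0 := by
      intro x
      have hm : g ((a • γ + b • δ) x) ∈ Submodule.map g (LinearMap.range (a • γ + b • δ)) :=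
        ⟨(a • γ + b • δ) x, ⟨x, rfl⟩, rfl⟩
      rw [hgbot] at hm
      exact Submodule.mem_bot ℂ |>.mp hm
    set v : Fin k → ℂ := fun j => g (Pi.single j 1) with hv
    have hvne : v ≠ 0 := by
      intro hcon
      apply hg0
      apply LinearMap.ext
      intro y
      rw [hsingle y g, LinearMap.zero_apply]
      apply Finset.sum_eq_zero
      intro j _
      have : v j = 0 := by rw [hcon, Pi.zero_apply]
      rw [show g (Pi.single j 1) = v j from rfl, this, mul_zero]
    have hu : (![a, b] : Fin 2 → ℂ) ≠ 0 := by
      intro hcon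
      apply hab
      constructor
      · have := congrFun hcon 0; simpa using this
      · have := congrFun hcon 1; simpa using this
    apply hgen ![a, b] hu v hvne
    apply LinearMap.ext
    intro x
    rw [LinearMap.zero_apply]
    have hL : (∑ i, ∑ j, (![a, b] i * v j) • Ω i j) x
        = ∑ j, (a * Ω 0 j x + b * Ω 1 j x) * v j := by
      rw [LinearMap.sum_apply, Fin.sum_univ_two, LinearMap.sum_apply, LinearMap.sum_apply,
        ← Finset.sum_add_distrib]
      refine Finset.sum_congr rfl fun j _ => ?_
      rw [LinearMap.smul_apply, LinearMap.smul_apply, smul_eq_mul, smul_eq_mul]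
      show a * v j * Ω 0 j x + b * v j * Ω 1 j x = _
      ring
    rw [hL]
    have hR := hgz x
    rw [hsingle ((a • γ + b • δ) x) g] at hR
    rw [← hR]
    refine Finset.sum_congr rfl fun j _ => ?_
    show (a * Ω 0 j x + b * Ω 1 j x) * v j = ((a • γ + b • δ) x) j * v j
    have h7 : ((a • γ + b • δ) x) j = a * Ω 0 j x + b * Ω 1 j x := rfl
    rw [h7]
  have hS2 : Stmt8.S2 γ δ := by
    intro x hγx hδx
    have hzero : ∀ fl : Module.Dual ℂ (Fin (n+1) → ℂ), fl x = 0 := by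
      intro fl
      have hmem : fl ∈ Submodule.span ℂ (Set.range fun p : Fin 2 × Fin k => Ω p.1 p.2) := by
        rw [hspan]; trivial
      induction hmem using Submodule.span_induction with
      | mem y hy =>
        obtain ⟨⟨i, j⟩, rfl⟩ := hy
        show Ω i j x = 0
        fin_cases i
        · show Ω 0 j x = 0
          rw [← hγapp x j, hγx, Pi.zero_apply]
        · show Ω 1 j x = 0
          rw [← hδapp x j, hδx, Pi.zero_apply]
      | zero => rw [LinearMap.zero_apply]
      | add y z _ _ hy hz => rw [LinearMap.add_apply, hy, hz, add_zero]
      | smul a y _ hy => rw [LinearMap.smul_apply, hy, smul_zero]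
    funext i
    rw [Pi.zero_apply]
    exact hzero (LinearMap.proj i)
  obtain ⟨N, K, b, f, c, hbli, hbsp, hfli, hfsp, hcmono, hclt, hccov, hγval, hδval, hγ0, hδ0⟩ :=
    Stmt8.decomp (Module.finrank ℂ (Fin (n+1) → ℂ)) (Fin (n+1) → ℂ) (Fin k → ℂ) γ δ
      le_rfl hS1 hS2
  have hbrange : (Set.range fun i : Fin N => b (i : ℕ)) = b '' Set.Iio N := by
    ext x
    constructor
    · rintro ⟨i, rfl⟩; exact ⟨(i : ℕ), Set.mem_Iio.mpr i.isLt, rfl⟩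
    · rintro ⟨i, hi, rfl⟩; exact ⟨⟨i, Set.mem_Iio.mp hi⟩, rfl⟩
  have hfrange : (Set.range fun j : Fin K => f (j : ℕ)) = f '' Set.Iio K := by
    ext x
    constructor
    · rintro ⟨j, rfl⟩; exact ⟨(j : ℕ), Set.mem_Iio.mpr j.isLt, rfl⟩
    · rintro ⟨j, hj, rfl⟩; exact ⟨⟨j, Set.mem_Iio.mp hj⟩, rfl⟩
  have hbsp' : ⊤ ≤ Submodule.span ℂ (Set.range fun i : Fin N => b (i : ℕ)) := by
    rw [hbrange, hbsp]
  have hfsp' : ⊤ ≤ Submodule.span ℂ (Set.range fun j : Fin K => f (j : ℕ)) := by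
    rw [hfrange, hfsp]
  have hN : N = n + 1 := by
    have h1 := Module.finrank_eq_card_basis (Module.Basis.mk hbli hbsp')
    rw [Module.finrank_pi, Fintype.card_fin, Fintype.card_fin] at h1
    omega
  have hK : k = K := by
    have h1 := Module.finrank_eq_card_basis (Module.Basis.mk hfli hfsp')
    rw [Module.finrank_pi, Fintype.card_fin, Fintype.card_fin] at h1
    omega
  subst hN
  subst hK
  let B : Module.Basis (Fin (n+1)) ℂ (Fin (n+1) → ℂ) := Module.Basis.mk hbli hbsp'
  have hB : ∀ i, B i = b (i : ℕ) := fun i => Module.Basis.mk_apply _ _ i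
  let Bf : Module.Basis (Fin k) ℂ (Fin k → ℂ) := Module.Basis.mk hfli hfsp'
  have hBf : ∀ j, Bf j = f (j : ℕ) := fun j => Module.Basis.mk_apply _ _ j
  let M1 : Matrix (Fin k) (Fin k) ℂ := (Pi.basisFun ℂ (Fin k)).toMatrix ⇑Bf
  let M2 : Matrix (Fin k) (Fin k) ℂ := Bf.toMatrix ⇑(Pi.basisFun ℂ (Fin k))
  have hM21 : M2 * M1 = 1 := Module.Basis.toMatrix_mul_toMatrix_flip Bf (Pi.basisFun ℂ (Fin k))
  have hM12 : M1 * M2 = 1 := Module.Basis.toMatrix_mul_toMatrix_flip (Pi.basisFun ℂ (Fin k)) Bf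
  have hM1app : ∀ (t j' : Fin k), M1 t j' = f (j' : ℕ) t := by
    intro t j'
    show (Pi.basisFun ℂ (Fin k)).repr (Bf j') t = _
    rw [Pi.basisFun_repr, hBf]
  have hcinj : ∀ j1 j2 : Fin k, c (j1 : ℕ) = c (j2 : ℕ) → j1 = j2 := by
    intro j1 j2 h
    by_contra hne
    rcases lt_or_gt_of_ne (fun h' : (j1 : ℕ) = (j2 : ℕ) => hne (Fin.ext h')) with h' | h'
    · have := hcmono (j1 : ℕ) (j2 : ℕ) h' j2.isLt; omega
    · have := hcmono (j2 : ℕ) (j1 : ℕ) h' j1.isLt; omega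
  refine ⟨1, isUnit_one, M2ᵀ, ?_, B.dualBasis,
    (fun j => ⟨c (j : ℕ), by have := hclt (j : ℕ) j.isLt; omega⟩), ?_, ?_, ?_, ?_, ?_⟩
  · -- IsUnit M2ᵀ
    exact ⟨⟨M2ᵀ, M1ᵀ,
      by rw [← Matrix.transpose_mul, hM12, Matrix.transpose_one],
      by rw [← Matrix.transpose_mul, hM21, Matrix.transpose_one]⟩, rfl⟩
  · -- strict mono
    intro j1 j2 h
    show c (j1 : ℕ) < c (j2 : ℕ)
    exact hcmono _ _ h j2.isLt
  · -- c 0 = 0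
    show c 0 = 0
    obtain ⟨j, hj, hor⟩ := hccov 0 (by omega)
    rcases hor with h | h
    · rcases Nat.eq_zero_or_pos j with hj0 | hj0
      · rw [hj0] at h; exact h.symm
      · exfalso; have := hcmono 0 j hj0 hj; omega
    · omega
  · -- c (k-1) = n-1
    show c (k - 1) = n - 1
    obtain ⟨j, hj, hor⟩ := hccov n (by omega)
    rcases hor with h | h
    · exfalso; have := hclt j hj; omega
    · have hcj : c j = n - 1 := by omega
      rcases Nat.eq_or_lt_of_le (by omega : j ≤ k - 1) with h' | h'
      · rw [← h', hcj]
      · exfalso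
        have h1 := hcmono j (k-1) h' (by omega)
        have h2 := hclt (k-1) (by omega)
        omega
  · -- steps of 1 or 2
    intro j hj
    show c (j + 1) - c j = 1 ∨ c (j + 1) - c j = 2
    by_contra hcon
    push_neg at hcon
    have hmono2 := hcmono j (j+1) (by omega) hj
    have hge : c j + 3 ≤ c (j + 1) := by omega
    obtain ⟨j', hj', hor⟩ := hccov (c j + 2) (by have := hclt (j+1) hj; omega)
    have hcj' : c j < c j' ∧ c j' < c (j+1) := by omega
    have h1 : j < j' := by
      by_contra h
      rcases Nat.eq_or_lt_of_le (by omega : j' ≤ j) with h' | h'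
      · rw [h'] at hcj'; omega
      · have := hcmono j' j h' (by omega); omega
    have h2 : j' < j + 1 := by
      by_contra h
      rcases Nat.eq_or_lt_of_le (by omega : j + 1 ≤ j') with h' | h'
      · rw [← h'] at hcj'; omega
      · have := hcmono (j+1) j' h' (by omega); omega
    omega
  · -- the entries
    intro j
    have hrow : ∀ i2 : Fin 2, matConj 1 Ω M2ᵀ i2 j = ∑ t, M2ᵀ t j • Ω i2 t := by
      intro i2
      show ∑ s, ∑ t, ((1 : Matrix (Fin 2) (Fin 2) ℂ) i2 s * M2ᵀ t j) • Ω s t = _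
      rw [Finset.sum_eq_single i2]
      · exact Finset.sum_congr rfl fun t _ => by rw [Matrix.one_apply_eq, one_mul]
      · intro s _ hs
        apply Finset.sum_eq_zero
        intro t _
        rw [Matrix.one_apply_ne' hs, zero_mul, zero_smul]
      · intro h; exact absurd (Finset.mem_univ _) h
    have hsum1 : ∀ j' : Fin k, ∑ t, M2ᵀ t j * f (j' : ℕ) t
        = if j = j' then 1 else 0 := by
      intro j'
      have h1 : ∑ t, M2ᵀ t j * f (j' : ℕ) t = (M2 * M1) j j' := by
        rw [Matrix.mul_apply]
        refine Finset.sum_congr rfl fun t _ => ?_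
        rw [hM1app t j']
        rfl
      rw [h1, hM21, Matrix.one_apply]
    constructor
    · -- row 0
      rw [hrow 0]
      apply B.ext
      intro i
      have hL : (∑ t, M2ᵀ t j • Ω 0 t) (B i) = ∑ t, M2ᵀ t j * γ (B i) t := by
        rw [LinearMap.sum_apply]
        exact Finset.sum_congr rfl fun t _ => by
          rw [LinearMap.smul_apply, smul_eq_mul, hγapp]
      rw [hL, Module.Basis.dualBasis_apply_self]
      by_cases hex : ∃ j' : Fin k, (i : ℕ) = c (j' : ℕ)
      · obtain ⟨j', hj'⟩ := hex
        have hbv : γ (B i) = f (j' : ℕ) := by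
          rw [hB i, hj']
          exact hγval (j' : ℕ) j'.isLt
        rw [hbv, hsum1 j']
        by_cases hjj : j = j'
        · rw [if_pos hjj, if_pos (by
            apply Fin.ext
            show (i : ℕ) = c (j : ℕ)
            rw [hj', hjj])]
        · rw [if_neg hjj, if_neg (by
            intro hcon
            have : (i : ℕ) = c (j : ℕ) := congrArg Fin.val hcon
            exact hjj (hcinj j j' (by omega)))]
      · have hbz : γ (B i) = 0 := by
          rw [hB i]
          exact hγ0 (i : ℕ) i.isLt (fun j' hjk heq => hex ⟨⟨j', hjk⟩, heq⟩)
        rw [hbz]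
        rw [if_neg (by
          intro hcon
          exact hex ⟨j, congrArg Fin.val hcon⟩)]
        apply Finset.sum_eq_zero
        intro t _
        rw [Pi.zero_apply, mul_zero]
    · -- row 1
      rw [hrow 1]
      apply B.ext
      intro i
      have hL : (∑ t, M2ᵀ t j • Ω 1 t) (B i) = ∑ t, M2ᵀ t j * δ (B i) t := by
        rw [LinearMap.sum_apply]
        exact Finset.sum_congr rfl fun t _ => by
          rw [LinearMap.smul_apply, smul_eq_mul, hδapp]
      rw [hL, Module.Basis.dualBasis_apply_self]
      by_cases hex : ∃ j' : Fin k, (i : ℕ) = c (j' : ℕ) + 1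
      · obtain ⟨j', hj'⟩ := hex
        have hbv : δ (B i) = f (j' : ℕ) := by
          rw [hB i, hj']
          exact hδval (j' : ℕ) j'.isLt
        rw [hbv, hsum1 j']
        by_cases hjj : j = j'
        · rw [if_pos hjj, if_pos (by
            apply Fin.ext
            show (i : ℕ) = c (j : ℕ) + 1
            rw [hj', hjj])]
        · rw [if_neg hjj, if_neg (by
            intro hcon
            have : (i : ℕ) = c (j : ℕ) + 1 := congrArg Fin.val hcon
            exact hjj (hcinj j j' (by omega)))]
      · have hbz : δ (B i) = 0 := by
          rw [hB i]
          exact hδ0 (i : ℕ) i.isLt (fun j' hjk heq => hex ⟨⟨j', hjk⟩, heq⟩)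
        rw [hbz]
        rw [if_neg (by
          intro hcon
          exact hex ⟨j, congrArg Fin.val hcon⟩)]
        apply Finset.sum_eq_zero
        intro t _
        rw [Pi.zero_apply, mul_zero]
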